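/- Let R be a commutative ring and let C be the class of monomorphisms of R-modules with flat cokernel. Then C is closed under pushout product: if A_1 → X_1 and A_2 → X_2 are monomorphisms with flat cokernels C_1, C_2, then the induced map (X_1 ⊗ A_2) ⊔_{A_1 ⊗ A_2} (A_1 ⊗ X_2) → X_1 ⊗ X_2 is a monomorphism with cokernel isomorphic to C_1 ⊗ C_2 (in particular flat). -/

import Mathlib

/-!
STATEMENT 7: Let `R` be a commutative ring and `C` the class of monomorphisms of `R`-modules
with flat cokernel.  Then `C` is closed under the pushout product: if `f₁ : A₁ → X₁` and
`f₂ : A₂ → X₂` are injective with flat cokernels `C₁`, `C₂`, then the induced map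
`(X₁ ⊗ A₂) ⊔_{A₁ ⊗ A₂} (A₁ ⊗ X₂) → X₁ ⊗ X₂` is injective and its cokernel is isomorphic to
`C₁ ⊗ C₂` (in particular flat).
-/

open TensorProduct

variable {R : Type*} [CommRing R]
variable {A₁ X₁ A₂ X₂ : Type*}
variable [AddCommGroup A₁] [AddCommGroup X₁] [AddCommGroup A₂] [AddCommGroup X₂]
variable [Module R A₁] [Module R X₁] [Module R A₂] [Module R X₂]

/-- The map `A₁ ⊗ A₂ → (X₁ ⊗ A₂) × (A₁ ⊗ X₂)`, `a ↦ ((f₁ ⊗ 1) a, −(1 ⊗ f₂) a)`, whose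
cokernel is the pushout of the span `X₁ ⊗ A₂ ← A₁ ⊗ A₂ → A₁ ⊗ X₂`. -/
noncomputable def pushoutRelation (f₁ : A₁ →ₗ[R] X₁) (f₂ : A₂ →ₗ[R] X₂) :
    A₁ ⊗[R] A₂ →ₗ[R] (X₁ ⊗[R] A₂) × (A₁ ⊗[R] X₂) :=
  (TensorProduct.map f₁ (LinearMap.id : A₂ →ₗ[R] A₂)).prod
    (-(TensorProduct.map (LinearMap.id : A₁ →ₗ[R] A₁) f₂))

/-- The pushout `(X₁ ⊗ A₂) ⊔_{A₁ ⊗ A₂} (A₁ ⊗ X₂)`. -/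
noncomputable abbrev PushoutCorner (f₁ : A₁ →ₗ[R] X₁) (f₂ : A₂ →ₗ[R] X₂) :=
  ((X₁ ⊗[R] A₂) × (A₁ ⊗[R] X₂)) ⧸ LinearMap.range (pushoutRelation f₁ f₂)

/-- The pushout-product map `(X₁ ⊗ A₂) ⊔_{A₁ ⊗ A₂} (A₁ ⊗ X₂) → X₁ ⊗ X₂`. -/
noncomputable def pushoutProductMap (f₁ : A₁ →ₗ[R] X₁) (f₂ : A₂ →ₗ[R] X₂) :
    PushoutCorner f₁ f₂ →ₗ[R] X₁ ⊗[R] X₂ :=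
  Submodule.liftQ _ ((TensorProduct.map LinearMap.id f₂).coprod (TensorProduct.map f₁ LinearMap.id))
    (by
      rw [LinearMap.range_le_ker_iff]
      ext a₁ a₂
      simp [pushoutRelation])

section AuxFlat

variable {A X : Type*} [AddCommGroup A] [AddCommGroup X] [Module R A] [Module R X]

/-- If `f` is injective with flat cokernel, then `id_M ⊗ f` is injective for every `M`. -/
lemma lTensor_injective_of_flat_quotient (M : Type*) [AddCommGroup M] [Module R M]
    (f : A →ₗ[R] X) (hf : Function.Injective f)
    (hc : Module.Flat R (X ⧸ LinearMap.range f)) :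
    Function.Injective (f.lTensor M) := by
  haveI := hc
  have hg₂ : Function.Surjective (Finsupp.linearCombination R (_root_.id : M → M)) := by
    intro m
    exact ⟨Finsupp.single m 1, by simp⟩
  exact lTensor_injective_of_exact_of_exact_of_rTensor_injective
    ((Finsupp.linearCombination R (_root_.id : M → M)).exact_subtype_ker_map) hg₂
    f.exact_map_mkQ_range (Submodule.mkQ_surjective _)
    (Module.Flat.rTensor_preserves_injective_linearMap _ (Submodule.injective_subtype _))
    (Module.Flat.lTensor_preserves_injective_linearMap f hf)

/-- If `f` is injective with flat cokernel, then `f ⊗ id_M` is injective for every `M`. -/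
lemma rTensor_injective_of_flat_quotient (M : Type*) [AddCommGroup M] [Module R M]
    (f : A →ₗ[R] X) (hf : Function.Injective f)
    (hc : Module.Flat R (X ⧸ LinearMap.range f)) :
    Function.Injective (f.rTensor M) := by
  have h := lTensor_injective_of_flat_quotient M f hf hc
  have e : f.rTensor M = (TensorProduct.comm R M X).toLinearMap ∘ₗ
      ((f.lTensor M) ∘ₗ (TensorProduct.comm R A M).toLinearMap) := by
    ext a m
    simp
  rw [e]
  exact (TensorProduct.comm R M X).injective.comp
    (h.comp (TensorProduct.comm R A M).injective)

end AuxFlat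

theorem statement7 (f₁ : A₁ →ₗ[R] X₁) (f₂ : A₂ →ₗ[R] X₂)
    (h₁ : Function.Injective f₁) (h₂ : Function.Injective f₂)
    (hc₁ : Module.Flat R (X₁ ⧸ LinearMap.range f₁))
    (hc₂ : Module.Flat R (X₂ ⧸ LinearMap.range f₂)) :
    Function.Injective (pushoutProductMap f₁ f₂) ∧
    Nonempty (((X₁ ⊗[R] X₂) ⧸ LinearMap.range (pushoutProductMap f₁ f₂)) ≃ₗ[R]
      ((X₁ ⧸ LinearMap.range f₁) ⊗[R] (X₂ ⧸ LinearMap.range f₂))) ∧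
    Module.Flat R ((X₁ ⊗[R] X₂) ⧸ LinearMap.range (pushoutProductMap f₁ f₂)) := by
  haveI := hc₁; haveI := hc₂
  set π₁ : X₁ →ₗ[R] X₁ ⧸ LinearMap.range f₁ := (LinearMap.range f₁).mkQ with hπ₁def
  set π₂ : X₂ →ₗ[R] X₂ ⧸ LinearMap.range f₂ := (LinearMap.range f₂).mkQ with hπ₂def
  -- injectivity of various tensored maps
  have hL : Function.Injective (f₂.lTensor (X₁ ⧸ LinearMap.range f₁)) :=
    Module.Flat.lTensor_preserves_injective_linearMap f₂ h₂
  have hRX : Function.Injective (f₁.rTensor X₂) :=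
    rTensor_injective_of_flat_quotient X₂ f₁ h₁ hc₁
  -- right exactness facts
  have E1 : Function.Exact (f₁.rTensor A₂) (π₁.rTensor A₂) :=
    rTensor_exact A₂ f₁.exact_map_mkQ_range (Submodule.mkQ_surjective _)
  have E2 : Function.Exact (f₁.rTensor X₂) (π₁.rTensor X₂) :=
    rTensor_exact X₂ f₁.exact_map_mkQ_range (Submodule.mkQ_surjective _)
  have E3 : Function.Exact (f₂.lTensor (X₁ ⧸ LinearMap.range f₁))
      (π₂.lTensor (X₁ ⧸ LinearMap.range f₁)) :=
    lTensor_exact _ f₂.exact_map_mkQ_range (Submodule.mkQ_surjective _)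
  -- kernel of the corner map is contained in the range of the relation
  have hker : LinearMap.ker ((TensorProduct.map (LinearMap.id : X₁ →ₗ[R] X₁) f₂).coprod
      (TensorProduct.map f₁ (LinearMap.id : X₂ →ₗ[R] X₂)))
      ≤ LinearMap.range (pushoutRelation f₁ f₂) := by
    rintro ⟨u, v⟩ h
    rw [LinearMap.mem_ker, LinearMap.coprod_apply] at h
    have h' : f₂.lTensor X₁ u + f₁.rTensor X₂ v = 0 := h
    have h1 : π₁.rTensor A₂ u = 0 := by
      apply hL
      rw [map_zero]
      have c1 : f₂.lTensor _ (π₁.rTensor A₂ u) = π₁.rTensor X₂ (f₂.lTensor X₁ u) := by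
        rw [← LinearMap.comp_apply, ← LinearMap.comp_apply,
          LinearMap.lTensor_comp_rTensor, LinearMap.rTensor_comp_lTensor]
      rw [c1, show f₂.lTensor X₁ u = -(f₁.rTensor X₂ v) from eq_neg_of_add_eq_zero_left h',
        map_neg, ← LinearMap.comp_apply, ← LinearMap.rTensor_comp, hπ₁def,
        LinearMap.range_mkQ_comp, LinearMap.rTensor_zero, LinearMap.zero_apply, neg_zero]
    obtain ⟨w, hw⟩ := (E1 u).mp h1
    have hv : v = -(f₂.lTensor A₁ w) := by
      apply hRX
      rw [map_neg]
      have c2 : f₁.rTensor X₂ (f₂.lTensor A₁ w) = f₂.lTensor X₁ (f₁.rTensor A₂ w) := by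
        rw [← LinearMap.comp_apply, ← LinearMap.comp_apply,
          LinearMap.rTensor_comp_lTensor, LinearMap.lTensor_comp_rTensor]
      rw [c2, hw]
      exact eq_neg_of_add_eq_zero_right h'
    refine ⟨w, ?_⟩
    have : pushoutRelation f₁ f₂ w = (f₁.rTensor A₂ w, -(f₂.lTensor A₁ w)) := rfl
    rw [this, hw, ← hv]
  have hinj : Function.Injective (pushoutProductMap f₁ f₂) := by
    rw [← LinearMap.ker_eq_bot]
    exact Submodule.ker_liftQ_eq_bot _ _ _ hker
  -- range of the corner map equals kernel of π₁ ⊗ π₂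
  have hrange : LinearMap.range (pushoutProductMap f₁ f₂)
      = LinearMap.ker (TensorProduct.map π₁ π₂) := by
    have : LinearMap.range (pushoutProductMap f₁ f₂)
        = LinearMap.range ((TensorProduct.map (LinearMap.id : X₁ →ₗ[R] X₁) f₂).coprod
            (TensorProduct.map f₁ (LinearMap.id : X₂ →ₗ[R] X₂))) :=
      Submodule.range_liftQ _ _ _
    rw [this, LinearMap.range_coprod]
    apply le_antisymm
    · apply sup_le
      · rw [LinearMap.range_le_ker_iff]
        ext x y
        simp [hπ₂def, (Submodule.Quotient.mk_eq_zero _).mpr (LinearMap.mem_range_self f₂ y)]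
      · rw [LinearMap.range_le_ker_iff]
        ext x y
        simp [hπ₁def, (Submodule.Quotient.mk_eq_zero _).mpr (LinearMap.mem_range_self f₁ x)]
    · intro t ht
      rw [LinearMap.mem_ker] at ht
      have h0 : (π₂.lTensor _) ((π₁.rTensor X₂) t) = 0 := by
        rw [← LinearMap.comp_apply, LinearMap.lTensor_comp_rTensor, ht]
      obtain ⟨s, hs⟩ := (E3 _).mp h0
      obtain ⟨s', hs'⟩ := LinearMap.rTensor_surjective A₂
        (g := π₁) (Submodule.mkQ_surjective _) s
      have h3 : π₁.rTensor X₂ (t - f₂.lTensor X₁ s') = 0 := by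
        rw [map_sub, ← hs, ← hs', ← LinearMap.comp_apply, ← LinearMap.comp_apply,
          LinearMap.lTensor_comp_rTensor, LinearMap.rTensor_comp_lTensor, sub_self]
      obtain ⟨a, ha⟩ := (E2 _).mp h3
      refine Submodule.mem_sup.mpr ⟨f₂.lTensor X₁ s', ⟨s', rfl⟩, f₁.rTensor X₂ a, ⟨a, rfl⟩, ?_⟩
      rw [ha]
      abel
  have hsurj : Function.Surjective (TensorProduct.map π₁ π₂) :=
    TensorProduct.map_surjective (Submodule.mkQ_surjective _) (Submodule.mkQ_surjective _)
  refine ⟨hinj, ⟨?_⟩, ?_⟩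
  · rw [hrange]
    exact LinearMap.quotKerEquivOfSurjective _ hsurj
  · have e : ((X₁ ⊗[R] X₂) ⧸ LinearMap.range (pushoutProductMap f₁ f₂)) ≃ₗ[R]
        ((X₁ ⧸ LinearMap.range f₁) ⊗[R] (X₂ ⧸ LinearMap.range f₂)) := by
      rw [hrange]
      exact LinearMap.quotKerEquivOfSurjective _ hsurj
    exact Module.Flat.of_linearEquiv e
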